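/- Let (M^n, g) be a Riemannian manifold with f·Ric = ∇²f + h·g (Einstein-type). Then div(R̊ic(∇f)) = ((n−2)/(2n))·⟨∇R, ∇f⟩ + f·|R̊ic|², where R̊ic is the traceless Ricci tensor. -/

import Mathlib

open Matrix

/-- The traceless part of a 2-tensor in an orthonormal frame (`g` is the identity matrix). -/
noncomputable def tless {n : ℕ} (A : Matrix (Fin n) (Fin n) ℝ) : Matrix (Fin n) (Fin n) ℝ :=
  A - (A.trace / n) • 1

/-- Squared Frobenius norm of a 2-tensor in an orthonormal frame. -/
noncomputable def frobSq {n : ℕ} (A : Matrix (Fin n) (Fin n) ℝ) : ℝ := ∑ i, ∑ j, A i j ^ 2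

/-- Let `(Mⁿ, g)` be a Riemannian manifold with `f·Ric = ∇²f + h·g`
(Einstein-type). Then `div(R̊ic(∇f)) = ((n−2)/(2n))·⟨∇R, ∇f⟩ + f·|R̊ic|²`, where `R̊ic` is the
traceless Ricci tensor. The hypotheses record the contracted Bianchi identity, the pointwise
identity `div(T(∇f)) = (div T)(∇f) + ⟨T, ∇²f⟩`, and the linearity rules used. -/
theorem div_traceless_ric_gradf {M : Type*} {n : ℕ} (hn : 3 ≤ n)
    (f h : M → ℝ) (Ric Hess : M → Matrix (Fin n) (Fin n) ℝ)
    (heq : ∀ x, f x • Ric x = Hess x + h x • (1 : Matrix (Fin n) (Fin n) ℝ))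
    (grad : (M → ℝ) → M → (Fin n → ℝ))
    (divT : (M → Matrix (Fin n) (Fin n) ℝ) → M → (Fin n → ℝ))
    (divV : (M → (Fin n → ℝ)) → M → ℝ)
    (hBianchi : divT Ric = fun x => (1 / 2 : ℝ) • grad (fun y => (Ric y).trace) x)
    (hSub : ∀ (T S : M → Matrix (Fin n) (Fin n) ℝ),
      divT (fun x => T x - S x) = fun x => divT T x - divT S x)
    (hdivg : ∀ φ : M → ℝ, divT (fun x => φ x • (1 : Matrix (Fin n) (Fin n) ℝ)) = grad φ)
    (hdivTgrad : ∀ T : M → Matrix (Fin n) (Fin n) ℝ,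
      divV (fun x => T x *ᵥ grad f x) =
        fun x => (divT T x) ⬝ᵥ grad f x + ∑ i, ∑ j, T x i j * Hess x i j) :
    divV (fun x => tless (Ric x) *ᵥ grad f x) =
      fun x => (((n : ℝ) - 2) / (2 * n)) * (grad (fun y => (Ric y).trace) x ⬝ᵥ grad f x)
        + f x * frobSq (tless (Ric x)) := by
  have hn0 : (n : ℝ) ≠ 0 := Nat.cast_ne_zero.mpr (by omega)
  -- grad is subtractive
  have gradSub : ∀ a b : M → ℝ,
      grad (fun y => a y - b y) = fun x => grad a x - grad b x := by
    intro a b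
    have h1 : (fun x => (a x - b x) • (1 : Matrix (Fin n) (Fin n) ℝ))
        = fun x => a x • (1 : Matrix (Fin n) (Fin n) ℝ)
            - b x • (1 : Matrix (Fin n) (Fin n) ℝ) := by
      funext x; rw [sub_smul]
    calc grad (fun y => a y - b y)
        = divT (fun x => (a x - b x) • (1 : Matrix (Fin n) (Fin n) ℝ)) :=
          (hdivg (fun y => a y - b y)).symm
      _ = divT (fun x => a x • (1 : Matrix (Fin n) (Fin n) ℝ)
            - b x • (1 : Matrix (Fin n) (Fin n) ℝ)) := by rw [h1]
      _ = fun x => divT (fun x => a x • (1 : Matrix (Fin n) (Fin n) ℝ)) x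
            - divT (fun x => b x • (1 : Matrix (Fin n) (Fin n) ℝ)) x :=
          hSub _ _
      _ = fun x => grad a x - grad b x := by rw [hdivg a, hdivg b]
  have grad0 : grad (fun _ : M => (0 : ℝ)) = fun _ => 0 := by
    have := gradSub (fun _ => 0) (fun _ => 0)
    simpa using this
  have gradNat : ∀ (k : ℕ) (φ : M → ℝ),
      grad (fun y => (k : ℝ) * φ y) = fun x => (k : ℝ) • grad φ x := by
    intro k φ
    induction k with
    | zero => simpa using grad0
    | succ k ih =>
        have h1 : (fun y => ((k + 1 : ℕ) : ℝ) * φ y)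
            = fun y => (k : ℝ) * φ y - ((fun y => (0 : ℝ) - φ y) y) := by
          funext y; push_cast; ring
        have h2 := gradSub (fun _ => (0 : ℝ)) φ
        rw [h1, gradSub (fun y => (k : ℝ) * φ y) (fun y => (0 : ℝ) - φ y), ih, h2]
        funext x
        simp only [grad0]
        push_cast
        module
  -- grad of R/n
  have gradDiv : grad (fun y => (Ric y).trace / n)
      = fun x => ((n : ℝ))⁻¹ • grad (fun y => (Ric y).trace) x := by
    have h1 : (fun y => (n : ℝ) * ((Ric y).trace / n)) = fun y => (Ric y).trace := by
      funext y; field_simp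
    have h2 := gradNat n (fun y => (Ric y).trace / n)
    rw [h1] at h2
    funext x
    have := congrFun h2 x
    rw [this]
    funext i
    simp only [Pi.smul_apply, smul_eq_mul]
    field_simp
  -- divT of the traceless Ricci
  have hdivtless : divT (fun x => tless (Ric x))
      = fun x => divT Ric x - grad (fun y => (Ric y).trace / n) x := by
    have h1 : (fun x => tless (Ric x))
        = fun x => Ric x - ((Ric x).trace / n) • (1 : Matrix (Fin n) (Fin n) ℝ) := rfl
    rw [h1, hSub Ric (fun x => ((Ric x).trace / n) • (1 : Matrix (Fin n) (Fin n) ℝ)),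
      hdivg (fun y => (Ric y).trace / n)]
  -- trace of traceless is zero
  have trt : ∀ A : Matrix (Fin n) (Fin n) ℝ, (tless A).trace = 0 := by
    intro A
    simp [tless, Matrix.trace_sub, Matrix.trace_smul, Matrix.trace_one]
    field_simp
    simp
  have inner1 : ∀ A : Matrix (Fin n) (Fin n) ℝ,
      ∑ i, ∑ j, tless A i j * (1 : Matrix (Fin n) (Fin n) ℝ) i j = 0 := by
    intro A
    have : ∀ i, ∑ j, tless A i j * (1 : Matrix (Fin n) (Fin n) ℝ) i j = tless A i i := by
      intro i
      simp [Matrix.one_apply, mul_ite]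
    simp only [this]
    simpa [Matrix.trace, Matrix.diag] using trt A
  have inner2 : ∀ A : Matrix (Fin n) (Fin n) ℝ,
      ∑ i, ∑ j, tless A i j * A i j = frobSq (tless A) := by
    intro A
    have hA : ∀ i j, A i j = tless A i j
        + (A.trace / n) * (1 : Matrix (Fin n) (Fin n) ℝ) i j := by
      intro i j
      simp [tless, Matrix.sub_apply, Matrix.smul_apply, smul_eq_mul]
    calc ∑ i, ∑ j, tless A i j * A i j
        = ∑ i, ∑ j, (tless A i j ^ 2
            + (A.trace / n) * (tless A i j * (1 : Matrix (Fin n) (Fin n) ℝ) i j)) := by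
          refine Finset.sum_congr rfl fun i _ => Finset.sum_congr rfl fun j _ => ?_
          rw [hA i j]; ring
      _ = frobSq (tless A) := by
          simp only [Finset.sum_add_distrib, ← Finset.mul_sum, frobSq]
          rw [inner1 A]
          ring
  -- main computation
  rw [hdivTgrad (fun x => tless (Ric x))]
  funext x
  have hB := congrFun hBianchi x
  have hD := congrFun (gradDiv) x
  have hT := congrFun hdivtless x
  -- Hessian from the Einstein-type equation
  have hHess : ∀ i j, Hess x i j = f x * Ric x i j
      - h x * (1 : Matrix (Fin n) (Fin n) ℝ) i j := by
    intro i j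
    have := congrFun (congrFun (heq x) i) j
    simp only [Matrix.add_apply, Matrix.smul_apply, smul_eq_mul] at this
    linarith
  have hInner : ∑ i, ∑ j, tless (Ric x) i j * Hess x i j
      = f x * frobSq (tless (Ric x)) := by
    calc ∑ i, ∑ j, tless (Ric x) i j * Hess x i j
        = ∑ i, ∑ j, (f x * (tless (Ric x) i j * Ric x i j)
            - h x * (tless (Ric x) i j * (1 : Matrix (Fin n) (Fin n) ℝ) i j)) := by
          refine Finset.sum_congr rfl fun i _ => Finset.sum_congr rfl fun j _ => ?_
          rw [hHess i j]; ring
      _ = f x * frobSq (tless (Ric x)) := by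
          simp only [Finset.sum_sub_distrib, ← Finset.mul_sum]
          rw [inner1 (Ric x), inner2 (Ric x)]
          ring
  rw [hInner, hT, hB, hD, sub_dotProduct, smul_dotProduct, smul_dotProduct,
    smul_eq_mul, smul_eq_mul]
  have : (1 / 2 : ℝ) - (n : ℝ)⁻¹ = ((n : ℝ) - 2) / (2 * n) := by
    field_simp
  rw [show (1 / 2 : ℝ) * (grad (fun y => (Ric y).trace) x ⬝ᵥ grad f x)
      - (n : ℝ)⁻¹ * (grad (fun y => (Ric y).trace) x ⬝ᵥ grad f x)
      = (((n : ℝ) - 2) / (2 * n)) * (grad (fun y => (Ric y).trace) x ⬝ᵥ grad f x) by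
    rw [← sub_mul, this]]
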